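/- arXiv:1711.07150 — 2 statements merged into one kernel-verified Lean document; each statement's English description precedes it below -/
import Mathlib

section
/- Let ψ : [r₀, ∞) → (0, ∞) be increasing, A > 0, q a positive integer, and suppose limsup_{r→∞} log(ψ(r)) / (log^[q-1] r)^A = ∞. Then for every finite G > 0 the integral ∫_{r₀}^{∞} ψ(r) / (exp((log^[q-1] r)^A))^{G+1} dr diverges. -/
open Filter MeasureTheory Set

lemma iterLog_tendsto (k : ℕ) : Tendsto (Real.log^[k]) atTop atTop := by
  induction k with
  | zero => simpa using tendsto_id
  | succ n ih =>
    rw [Function.iterate_succ']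
    exact Real.tendsto_log_atTop.comp ih

lemma iterLog_good (k : ℕ) : ∃ R : ℝ, ∀ r s : ℝ, R ≤ r → r ≤ s →
    1 ≤ Real.log^[k] r ∧ Real.log^[k] r ≤ Real.log^[k] s ∧
      Real.log^[k] (r + 1) ≤ Real.log^[k] r + 1 := by
  induction k with
  | zero => exact ⟨1, fun r s h1 h2 => by simpa using ⟨h1, h2⟩⟩
  | succ n ih =>
    obtain ⟨R, hR⟩ := ih
    obtain ⟨R', hR'⟩ := ((iterLog_tendsto n).eventually
      (eventually_ge_atTop (Real.exp 1))).exists_forall_of_atTop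
    refine ⟨max R R', fun r s h1 h2 => ?_⟩
    have hrR : R ≤ r := le_trans (le_max_left _ _) h1
    have hrR' : Real.exp 1 ≤ Real.log^[n] r := hR' r (le_trans (le_max_right _ _) h1)
    obtain ⟨hr1, hrs, hr2⟩ := hR r s hrR h2
    obtain ⟨_, hrr1, _⟩ := hR r (r + 1) hrR (by linarith)
    have hpos : (0:ℝ) < Real.log^[n] r := lt_of_lt_of_le one_pos hr1
    simp only [Function.iterate_succ', Function.comp_apply]
    refine ⟨?_, ?_, ?_⟩
    · simpa using (Real.le_log_iff_exp_le hpos).2 hrR'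
    · exact Real.log_le_log hpos hrs
    · have h3 : Real.log (Real.log^[n] (r+1)) ≤ Real.log (Real.log^[n] r + 1) :=
        Real.log_le_log (lt_of_lt_of_le hpos hrr1) hr2
      have h4 : Real.log^[n] r + 1 ≤ Real.exp 1 * Real.log^[n] r := by
        nlinarith [Real.exp_one_gt_d9, hr1]
      have h5 : Real.log (Real.log^[n] r + 1) ≤ Real.log (Real.exp 1 * Real.log^[n] r) :=
        Real.log_le_log (by linarith) h4
      rw [Real.log_mul (Real.exp_ne_zero 1) (ne_of_gt hpos), Real.log_exp] at h5
      linarith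


/-- If limsup_{r→∞} log ψ(r)/(log^[q-1] r)^A = ∞, then the integral
∫_{r₀}^∞ ψ(r)/(exp((log^[q-1] r)^A))^{G+1} dr diverges for every finite G > 0. -/
theorem stmt_2 (q : ℕ) (hq : 0 < q) (A r₀ : ℝ) (hA : 0 < A)
    (ψ : ℝ → ℝ) (hψpos : ∀ r ∈ Ici r₀, 0 < ψ r) (hψmono : MonotoneOn ψ (Ici r₀))
    (hσ : Filter.limsup
      (fun r => ((Real.log (ψ r) / (Real.log^[q - 1] r) ^ A : ℝ) : EReal)) atTop = ⊤) :
    ∀ G : ℝ, 0 < G →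
      ¬ IntegrableOn
        (fun r => ψ r / Real.exp ((Real.log^[q - 1] r) ^ A) ^ (G + 1)) (Ici r₀) := by
  intro G hG h
  set L : ℝ → ℝ := Real.log^[q - 1] with hL
  set f : ℝ → ℝ := fun r => ψ r / Real.exp ((L r) ^ A) ^ (G + 1) with hf
  obtain ⟨R, hR⟩ := iterLog_good (q - 1)
  have hfnn : ∀ r ∈ Ici r₀, 0 ≤ f r := fun r hr =>
    div_nonneg (hψpos r hr).le (Real.rpow_nonneg (Real.exp_nonneg _) _)
  set I : ℝ := ∫ r in Ici r₀, f r with hI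
  have hI0 : 0 ≤ I := setIntegral_nonneg measurableSet_Ici hfnn
  set M : ℝ := (G + 1) * 2 ^ A + |Real.log (I + 1)| + 1 with hM
  have key : ∃ᶠ r in atTop, M ≤ Real.log (ψ r) / (L r) ^ A := by
    by_contra hc
    rw [not_frequently] at hc
    have hb : limsup (fun r => ((Real.log (ψ r) / (L r) ^ A : ℝ) : EReal)) atTop
        ≤ (M : EReal) := by
      apply limsup_le_of_le
      · isBoundedDefault
      · exact hc.mono fun r hr => by exact_mod_cast (not_le.1 hr).le
    rw [hσ] at hb
    exact absurd hb (by simp)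
  obtain ⟨r, hMr, hrbig⟩ :=
    (key.and_eventually (eventually_ge_atTop (max R r₀))).exists
  have hrR : R ≤ r := le_trans (le_max_left _ _) hrbig
  have hr0 : r₀ ≤ r := le_trans (le_max_right _ _) hrbig
  obtain ⟨hLr1, -, -⟩ := hR r r hrR le_rfl
  obtain ⟨-, hLrr1, hLr2⟩ := hR r (r + 1) hrR (by linarith)
  have hLrpos : (0:ℝ) < L r := lt_of_lt_of_le one_pos hLr1
  have hLA1 : 1 ≤ (L r) ^ A := by
    calc (1:ℝ) = 1 ^ A := (Real.one_rpow A).symm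
    _ ≤ (L r) ^ A := Real.rpow_le_rpow zero_le_one hLr1 hA.le
  have hpow2 : (L (r + 1)) ^ A ≤ 2 ^ A * (L r) ^ A := by
    have h1 : L (r + 1) ≤ 2 * L r := by linarith
    calc (L (r + 1)) ^ A ≤ (2 * L r) ^ A :=
          Real.rpow_le_rpow (by linarith) h1 hA.le
    _ = 2 ^ A * (L r) ^ A := Real.mul_rpow (by norm_num) hLrpos.le
  have hψr : Real.exp (M * (L r) ^ A) ≤ ψ r := by
    have h1 : M * (L r) ^ A ≤ Real.log (ψ r) := by
      calc M * (L r) ^ A ≤ (Real.log (ψ r) / (L r) ^ A) * (L r) ^ A := by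
            apply mul_le_mul_of_nonneg_right hMr (by positivity)
      _ = Real.log (ψ r) := by field_simp
    calc Real.exp (M * (L r) ^ A) ≤ Real.exp (Real.log (ψ r)) := Real.exp_le_exp.2 h1
    _ = ψ r := Real.exp_log (hψpos r hr0)
  set c : ℝ := Real.exp (M * (L r) ^ A - (G + 1) * (L (r + 1)) ^ A) with hc
  have hstep : ∀ s ∈ Icc r (r + 1), c ≤ f s := by
    intro s hs
    obtain ⟨hLs1, hLs2, -⟩ := hR s (r + 1) (le_trans hrR hs.1) hs.2
    have hLspos : (0:ℝ) < L s := lt_of_lt_of_le one_pos hLs1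
    have hden : Real.exp ((L s) ^ A) ^ (G + 1) ≤ Real.exp ((L (r+1)) ^ A) ^ (G + 1) := by
      apply Real.rpow_le_rpow (Real.exp_nonneg _) _ (by linarith)
      exact Real.exp_le_exp.2 (Real.rpow_le_rpow hLspos.le hLs2 hA.le)
    have hψs : ψ r ≤ ψ s := hψmono hr0 (le_trans hr0 hs.1) hs.1
    have hc1 : c = Real.exp (M * (L r) ^ A) / Real.exp ((L (r+1)) ^ A) ^ (G + 1) := by
      rw [hc, Real.exp_sub]
      congr 1
      rw [mul_comm, Real.exp_mul]
    rw [hc1, hf]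
    exact div_le_div₀ (hψpos s (le_trans hr0 hs.1)).le (le_trans hψr hψs)
      (by positivity) hden
  have hcI : I + 1 ≤ c := by
    have h1 : M * (L r) ^ A - (G + 1) * (L (r + 1)) ^ A ≥
        (|Real.log (I + 1)| + 1) * (L r) ^ A := by
      have h2 : (G + 1) * (L (r + 1)) ^ A ≤ (G + 1) * (2 ^ A * (L r) ^ A) :=
        mul_le_mul_of_nonneg_left hpow2 (by linarith)
      have hM' : M * (L r) ^ A = (G+1)*2^A*(L r)^A + (|Real.log (I+1)|+1)*(L r)^A := by
        rw [hM]; ring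
      linarith
    have h3 : Real.log (I + 1) ≤ (|Real.log (I + 1)| + 1) * (L r) ^ A := by
      nlinarith [le_abs_self (Real.log (I + 1)), abs_nonneg (Real.log (I + 1))]
    calc I + 1 = Real.exp (Real.log (I + 1)) := (Real.exp_log (by linarith)).symm
    _ ≤ c := Real.exp_le_exp.2 (by linarith)
  have hsub : Icc r (r + 1) ⊆ Ici r₀ := fun s hs => le_trans hr0 hs.1
  have hint : IntegrableOn f (Icc r (r + 1)) := h.mono_set hsub
  have h1 : c * (volume (Icc r (r + 1))).toReal ≤ ∫ s in Icc r (r + 1), f s :=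
    setIntegral_ge_of_const_le_real measurableSet_Icc (by simp) hstep hint
  rw [Real.volume_Icc] at h1
  simp only [add_sub_cancel_left, ENNReal.toReal_ofReal zero_le_one, mul_one] at h1
  have h2 : ∫ s in Icc r (r + 1), f s ≤ I := by
    apply setIntegral_mono_set h
    · exact (ae_restrict_iff' measurableSet_Ici).2 (Eventually.of_forall hfnn)
    · exact HasSubset.Subset.eventuallyLE hsub
  linarith
end

section
/- Let ψ : [r₀, ∞) → (0, ∞) be increasing, A > 0, q a positive integer, and suppose liminf_{r→∞} log(ψ(r)) / (log^[q-1] r)^A = ∞. Then for every finite G > 0 the integral ∫_{r₀}^{∞} ψ(r) / (exp((log^[q-1] r)^A))^{G+1} dr diverges. -/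
open Filter MeasureTheory Set

lemma iter_log_tendsto_aux : ∀ n : ℕ, Filter.Tendsto (Real.log^[n]) Filter.atTop Filter.atTop := by
  intro n
  induction n with
  | zero => simpa using Filter.tendsto_id
  | succ n ih =>
    rw [Function.iterate_succ']
    exact Real.tendsto_log_atTop.comp ih

/-- If liminf_{r→∞} log ψ(r)/(log^[q-1] r)^A = ∞, then the integral
∫_{r₀}^∞ ψ(r)/(exp((log^[q-1] r)^A))^{G+1} dr diverges for every finite G > 0. -/
theorem stmt_9 (q : ℕ) (hq : 0 < q) (A r₀ : ℝ) (hA : 0 < A)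
    (ψ : ℝ → ℝ) (hψpos : ∀ r ∈ Ici r₀, 0 < ψ r) (hψmono : MonotoneOn ψ (Ici r₀))
    (hτ : Filter.liminf
      (fun r => ((Real.log (ψ r) / (Real.log^[q - 1] r) ^ A : ℝ) : EReal)) atTop = ⊤) :
    ∀ G : ℝ, 0 < G →
      ¬ IntegrableOn
        (fun r => ψ r / Real.exp ((Real.log^[q - 1] r) ^ A) ^ (G + 1)) (Ici r₀) := by
  intro G hG hInt
  have h1 : ∀ᶠ r in atTop,
      (((G + 2 : ℝ) : EReal)) <
        ((Real.log (ψ r) / (Real.log^[q - 1] r) ^ A : ℝ) : EReal) := by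
    apply Filter.eventually_lt_of_lt_liminf
    · rw [hτ]
      exact EReal.coe_lt_top _
    · exact Filter.isBoundedUnder_of ⟨⊥, fun a => bot_le⟩
  have h2 : ∀ᶠ r in atTop, (1 : ℝ) ≤ Real.log^[q - 1] r :=
    (iter_log_tendsto_aux (q - 1)).eventually_ge_atTop 1
  have h3 : ∀ᶠ r in atTop, r₀ ≤ r := eventually_ge_atTop r₀
  obtain ⟨M, hM⟩ := (h1.and (h2.and h3)).exists_forall_of_atTop
  -- pointwise lower bound 1 on Ici (max M r₀)
  set M' := max M r₀ with hM'
  have key : ∀ r ∈ Ici M',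
      (1 : ℝ) ≤ ψ r / Real.exp ((Real.log^[q - 1] r) ^ A) ^ (G + 1) := by
    intro r hr
    have hrM : M ≤ r := le_trans (le_max_left _ _) hr
    obtain ⟨hratio, hL1, hr0⟩ := hM r hrM
    set L := (Real.log^[q - 1] r) ^ A with hL
    have hLA1 : (1 : ℝ) ≤ L := Real.one_le_rpow hL1 hA.le
    have hLA0 : (0 : ℝ) < L := lt_of_lt_of_le one_pos hLA1
    have hratio' : (G + 2) < Real.log (ψ r) / L := by exact_mod_cast hratio
    have hlog : (G + 2) * L < Real.log (ψ r) := (lt_div_iff₀ hLA0).mp hratio'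
    have hψr : 0 < ψ r := hψpos r hr0
    have hψlb : Real.exp ((G + 2) * L) < ψ r := by
      calc Real.exp ((G + 2) * L) < Real.exp (Real.log (ψ r)) :=
            Real.exp_lt_exp.mpr hlog
        _ = ψ r := Real.exp_log hψr
    have hE : Real.exp L ^ (G + 1) = Real.exp (L * (G + 1)) := (Real.exp_mul L (G + 1)).symm
    rw [hE]
    rw [le_div_iff₀ (Real.exp_pos _)]
    have : Real.exp (L * (G + 1)) ≤ Real.exp ((G + 2) * L) := by
      apply Real.exp_le_exp.mpr
      nlinarith
    calc (1 : ℝ) * Real.exp (L * (G + 1)) = Real.exp (L * (G + 1)) := one_mul _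
      _ ≤ Real.exp ((G + 2) * L) := this
      _ ≤ ψ r := hψlb.le
  -- contradiction with integrability
  have hInt' : IntegrableOn
      (fun r => ψ r / Real.exp ((Real.log^[q - 1] r) ^ A) ^ (G + 1)) (Ici M') :=
    hInt.mono_set (Ici_subset_Ici.mpr (le_max_right _ _))
  have hconst : IntegrableOn (fun _ : ℝ => (1 : ℝ)) (Ici M') := by
    apply hInt'.mono' aestronglyMeasurable_const
    filter_upwards [ae_restrict_mem measurableSet_Ici] with r hr
    simpa [abs_of_nonneg] using key r hr
  rw [integrableOn_const_iff] at hconst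
  rcases hconst with h | h
  · norm_num at h
  · simp [Real.volume_Ici] at h
end
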